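/- Let Θ ⊂ ℝ^d with θ0 an interior point, and let y_1,…,y_n be i.i.d. with density p(·|θ0). Suppose the estimator sequence μ^{(n)} ∈ interior(Θ) satisfies (1/n)·Σ_{i=1}^n ∇_θ ln p(y_i|θ)|_{θ=μ^{(n)}} = R^{(n)} with R^{(n)} → 0 in probability. Assume further: (i) sup_{θ∈Θ} ‖ (1/n)·Σ_{i=1}^n ∇_θ ln p(y_i|θ) + ∇_θ KL(p(·|θ0) ‖ p(·|θ)) ‖ → 0 in probability; (ii) for every ε > 0, inf_{θ : ‖θ−θ0‖ ≥ ε} ‖ ∇_θ KL(p(·|θ0) ‖ p(·|θ)) ‖ > 0; (iii) ∇_θ ∫ ln p(y|θ) p(y|θ0) dy = ∫ ∇_θ ln p(y|θ) p(y|θ0) dy for all θ ∈ Θ. Then μ^{(n)} → θ0 in probability. -/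

import Mathlib

open MeasureTheory ProbabilityTheory Filter

/-- Consistency of near-zeroes of the normalized score (as produced by
variational Laplace fixed points): with `y₁, …, yₙ` i.i.d. with density `p(·|θ0)`, `θ0` an
interior point of `Θ ⊂ ℝ^d`, if `μ⁽ⁿ⁾ ∈ interior Θ` satisfies
`(1/n)·∑ᵢ ∇_θ ln p(yᵢ|θ)|_{μ⁽ⁿ⁾} = R⁽ⁿ⁾ → 0` in probability, the normalized score converges
uniformly in probability to `−∇_θ KL(p(·|θ0) ‖ p(·|θ))`, the gradient of the
Kullback–Leibler divergence is bounded away from `0` outside every ball around `θ0`, and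
differentiation and integration may be interchanged, then `μ⁽ⁿ⁾ → θ0` in probability. -/
theorem vl_near_zero_score_consistent
    {d : ℕ}
    {Ω : Type*} [MeasurableSpace Ω] (P : Measure Ω) [IsProbabilityMeasure P]
    (Θ : Set (EuclideanSpace ℝ (Fin d))) (θ0 : EuclideanSpace ℝ (Fin d))
    (hθ0 : θ0 ∈ interior Θ)
    (p : EuclideanSpace ℝ (Fin d) → ℝ → ℝ)
    -- i.i.d. observations with density `p(·|θ0)` with respect to Lebesgue measure
    (y : ℕ → Ω → ℝ) (hmeas : ∀ i, Measurable (y i))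
    (hindep : iIndepFun y P)
    (hlaw : ∀ i, Measure.map (y i) P
      = volume.withDensity fun x => ENNReal.ofReal (p θ0 x))
    -- the score `∇_θ ln p(y|θ)` and the Kullback–Leibler divergence `θ ↦ KL(p(·|θ0) ‖ p(·|θ))`
    (score : EuclideanSpace ℝ (Fin d) → ℝ → EuclideanSpace ℝ (Fin d))
    (hscore : ∀ θ x, score θ x = gradient (fun t => Real.log (p t x)) θ)
    (D : EuclideanSpace ℝ (Fin d) → ℝ)
    (hD : ∀ θ, D θ = ∫ x, p θ0 x * Real.log (p θ0 x / p θ x))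
    -- the estimators lie in the interior of `Θ`
    (μn : ℕ → Ω → EuclideanSpace ℝ (Fin d))
    (hin : ∀ n ω, μn n ω ∈ interior Θ)
    -- `(1/n)·∑ᵢ score(μ⁽ⁿ⁾)(yᵢ) = R⁽ⁿ⁾ → 0` in probability
    (hnear : ∀ ε > 0, Tendsto
      (fun (n : ℕ) => P {ω | ε <
        ‖(n : ℝ)⁻¹ • ∑ i ∈ Finset.range n, score (μn n ω) (y i ω)‖})
      atTop (nhds 0))
    -- (i) uniform convergence in probability of the normalized score to `−∇KL`
    (hunif : ∀ ε > 0, Tendsto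
      (fun (n : ℕ) => P {ω | ∃ θ ∈ Θ, ε <
        ‖(n : ℝ)⁻¹ • ∑ i ∈ Finset.range n, score θ (y i ω) + gradient D θ‖})
      atTop (nhds 0))
    -- (ii) `‖∇KL‖` is bounded away from `0` outside every ball around `θ0`
    (hsep : ∀ ε > 0, ∃ c > 0, ∀ θ ∈ Θ, ε ≤ ‖θ - θ0‖ → c ≤ ‖gradient D θ‖)
    -- (iii) interchange of differentiation and integration
    (hinter : ∀ θ ∈ Θ,
      gradient (fun t => ∫ x, Real.log (p t x) * p θ0 x) θ = ∫ x, p θ0 x • score θ x) :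
    -- conclusion: `μ⁽ⁿ⁾ → θ0` in probability
    ∀ ε > 0, Tendsto (fun n => P {ω | ε < ‖μn n ω - θ0‖}) atTop (nhds 0) := by
  intro ε hε
  obtain ⟨c, hc, hcb⟩ := hsep ε hε
  have h1 := hnear (c/3) (by positivity)
  have h2 := hunif (c/3) (by positivity)
  have hsub : ∀ n, P {ω | ε < ‖μn n ω - θ0‖} ≤
      P {ω | c/3 < ‖(n : ℝ)⁻¹ • ∑ i ∈ Finset.range n, score (μn n ω) (y i ω)‖}
      + P {ω | ∃ θ ∈ Θ, c/3 <
        ‖(n : ℝ)⁻¹ • ∑ i ∈ Finset.range n, score θ (y i ω) + gradient D θ‖} := by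
    intro n
    refine le_trans (measure_mono ?_) (measure_union_le _ _)
    intro ω hω
    set s := (n : ℝ)⁻¹ • ∑ i ∈ Finset.range n, score (μn n ω) (y i ω) with hs
    by_cases hcase : c/3 < ‖s‖
    · exact Or.inl hcase
    · push_neg at hcase
      refine Or.inr ⟨μn n ω, interior_subset (hin n ω), ?_⟩
      have hgrad : c ≤ ‖gradient D (μn n ω)‖ :=
        hcb _ (interior_subset (hin n ω)) (le_of_lt hω)
      have hnorm : ‖gradient D (μn n ω)‖ ≤ ‖s + gradient D (μn n ω)‖ + ‖s‖ := by
        have := norm_le_add_norm_add (gradient D (μn n ω)) s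
        rwa [add_comm (gradient D (μn n ω)) s] at this
      linarith
  have hadd := h1.add h2
  rw [show ((0:ENNReal)+0) = 0 from add_zero 0] at hadd
  exact tendsto_of_tendsto_of_tendsto_of_le_of_le tendsto_const_nhds hadd
    (fun n => zero_le) hsub
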